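/- Let R = ℤ_q (q = p^k) with Frobenius σ satisfying σ^k = id, and suppose the matrices α_s and constants c_1,...,c_r ∈ ℤ satisfy: (a) α_{s+1}·σ(α_s)^{-1} ≡ α_s·σ(α_{s−1})^{-1} mod p^s for all s ≥ 1 (so Φ := lim_{s→∞} α_s·α_{s−k}^{-1} exists p-adically), and (b) α_s + c_1·α_{s−k} + c_2·α_{s−2k} + ... + c_r·α_{s−rk} ≡ 0 mod p^{s−c} for all sufficiently large s and some fixed constant c. Then Φ^r + c_1·Φ^{r−1} + ... + c_r·I = 0. -/

import Mathlib

private lemma matrix_mul_mem_left' {g : ℕ} {R : Type*} [CommRing R] (I : Ideal R)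
    {A : Matrix (Fin g) (Fin g) R} (B : Matrix (Fin g) (Fin g) R)
    (h : ∀ u v, A u v ∈ I) : ∀ u v, (A * B) u v ∈ I := by
  intro u v
  rw [Matrix.mul_apply]
  exact Ideal.sum_mem I fun x _ => I.mul_mem_right _ (h u x)

private lemma matrix_mul_mem_right' {g : ℕ} {R : Type*} [CommRing R] (I : Ideal R)
    (A : Matrix (Fin g) (Fin g) R) {B : Matrix (Fin g) (Fin g) R}
    (h : ∀ u v, B u v ∈ I) : ∀ u v, (A * B) u v ∈ I := by
  intro u v
  rw [Matrix.mul_apply]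
  exact Ideal.sum_mem I fun x _ => I.mul_mem_left _ (h x v)

/-- the Atkin–Swinnerton-Dyer argument of Section 5.  Here
`O = W(𝔽_q) = ℤ_q` (`q = p^k`) is modelled by Witt vectors over the Galois field
with `p^k` elements, `σ` is a Frobenius lift with `σ^k = id`, and `α_s` is a sequence
of `g×g` matrices over `O` whose reductions mod `p` are invertible.  Hypothesis (a)
is the congruence `α_{s+1}·σ(α_s)⁻¹ ≡ α_s·σ(α_{s−1})⁻¹ mod p^s` (stated over
`O/p^s O`), `Φ` is the `p`-adic limit of `α_s·α_{s−k}⁻¹` (stated via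
`Φ·α_{s−k} ≡ α_s mod p^N` for `s` large), and hypothesis (b) is the generalized
Atkin–Swinnerton-Dyer congruence.  Conclusion: `Φ^r + c₁Φ^{r−1} + ⋯ + c_r·1 = 0`. -/
theorem asd_limit_matrix_annihilated (p k g r : ℕ) [Fact p.Prime] (hk : 1 ≤ k) (hr : 1 ≤ r)
    (σ : WittVector p (GaloisField p k) →+* WittVector p (GaloisField p k))
    (hσfrob : ∀ x : WittVector p (GaloisField p k),
      σ x - x ^ p ∈ Ideal.span {(p : WittVector p (GaloisField p k))})
    (hσk : (⇑σ)^[k] = id)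
    (α : ℕ → Matrix (Fin g) (Fin g) (WittVector p (GaloisField p k)))
    -- the reductions of the `α_s` mod `p` are invertible
    (hinv : ∀ s : ℕ, IsUnit ((α s).map
      (Ideal.Quotient.mk (Ideal.span {(p : WittVector p (GaloisField p k))}))))
    -- (a) `α_{s+1}·σ(α_s)⁻¹ ≡ α_s·σ(α_{s-1})⁻¹ mod p^s`
    (ha : ∀ s : ℕ, 1 ≤ s →
      ((α (s + 1)).map (Ideal.Quotient.mk
          (Ideal.span {(p : WittVector p (GaloisField p k)) ^ s}))) *
        (((α s).map ⇑σ).map (Ideal.Quotient.mk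
          (Ideal.span {(p : WittVector p (GaloisField p k)) ^ s})))⁻¹ =
      ((α s).map (Ideal.Quotient.mk
          (Ideal.span {(p : WittVector p (GaloisField p k)) ^ s}))) *
        (((α (s - 1)).map ⇑σ).map (Ideal.Quotient.mk
          (Ideal.span {(p : WittVector p (GaloisField p k)) ^ s})))⁻¹)
    -- `Φ = lim_{s→∞} α_s·α_{s-k}⁻¹`
    (Φ : Matrix (Fin g) (Fin g) (WittVector p (GaloisField p k)))
    (hΦ : ∀ N : ℕ, ∃ S : ℕ, ∀ s : ℕ, S ≤ s → ∀ u v : Fin g,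
      (Φ * α (s - k) - α s) u v ∈
        Ideal.span {(p : WittVector p (GaloisField p k)) ^ N})
    -- (b) the Atkin–Swinnerton-Dyer congruences with integer constants `c₁,…,c_r`
    (c : ℕ → ℤ)
    (hb : ∃ (C S : ℕ), ∀ s : ℕ, S ≤ s → r * k + C ≤ s → ∀ u v : Fin g,
      (α s + ∑ i ∈ Finset.Icc 1 r, c i • α (s - i * k)) u v ∈
        Ideal.span {(p : WittVector p (GaloisField p k)) ^ (s - C)}) :
    Φ ^ r + ∑ i ∈ Finset.Icc 1 r, c i • Φ ^ (r - i) = 0 := by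
  classical
  haveI : IsDiscreteValuationRing (WittVector p (GaloisField p k)) :=
    WittVector.isDiscreteValuationRing
  have hpnu : ¬ IsUnit (p : WittVector p (GaloisField p k)) :=
    (WittVector.irreducible p).not_isUnit
  -- units lift along the quotient mod p
  have hlift : ∀ x : WittVector p (GaloisField p k),
      IsUnit (Ideal.Quotient.mk
        (Ideal.span {(p : WittVector p (GaloisField p k))}) x) → IsUnit x := by
    intro x hx
    obtain ⟨y, hy⟩ := Ideal.Quotient.mk_surjective
      ((hx.unit⁻¹ : (WittVector p (GaloisField p k) ⧸
        Ideal.span {(p : WittVector p (GaloisField p k))})ˣ) :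
        WittVector p (GaloisField p k) ⧸
          Ideal.span {(p : WittVector p (GaloisField p k))})
    have hxy : Ideal.Quotient.mk (Ideal.span {(p : WittVector p (GaloisField p k))}) (x * y)
        = 1 := by
      rw [map_mul, hy]
      exact hx.unit.mul_inv
    have hmem : x * y - 1 ∈ Ideal.span {(p : WittVector p (GaloisField p k))} := by
      have : Ideal.Quotient.mk (Ideal.span {(p : WittVector p (GaloisField p k))}) (x * y - 1)
          = 0 := by rw [map_sub, map_one, hxy, sub_self]
      rwa [Ideal.Quotient.eq_zero_iff_mem] at this
    obtain ⟨z, hz⟩ := Ideal.mem_span_singleton'.mp hmem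
    have hnu : (-(z * (p : WittVector p (GaloisField p k)))) ∈
        nonunits (WittVector p (GaloisField p k)) := by
      intro h
      exact hpnu (isUnit_of_mul_isUnit_right ((IsUnit.neg_iff _).mp h))
    have hxyu : IsUnit (x * y) := by
      have := IsLocalRing.isUnit_one_sub_self_of_mem_nonunits _ hnu
      have hxy' : x * y = 1 - -(z * (p : WittVector p (GaloisField p k))) := by
        linear_combination -hz
      rwa [← hxy'] at this
    exact isUnit_of_mul_isUnit_left hxyu
  -- each α s is invertible
  have hα : ∀ t : ℕ, IsUnit (α t) := by
    intro t
    rw [Matrix.isUnit_iff_isUnit_det]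
    apply hlift
    rw [RingHom.map_det]
    exact (Matrix.isUnit_iff_isUnit_det _).mp (hinv t)
  -- key congruence: `Φ^j α_{s-jk} ≡ α_s mod p^N` for big `s`
  have key : ∀ j N : ℕ, ∃ S : ℕ, ∀ s : ℕ, S ≤ s → ∀ u v : Fin g,
      (Φ ^ j * α (s - j * k) - α s) u v ∈
        Ideal.span {(p : WittVector p (GaloisField p k)) ^ N} := by
    intro j
    induction j with
    | zero => exact fun N => ⟨0, fun s _ u v => by simp⟩
    | succ j ih =>
      intro N
      obtain ⟨S1, h1⟩ := ih N
      obtain ⟨S2, h2⟩ := hΦ N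
      refine ⟨S1 + S2 + k, fun s hs u v => ?_⟩
      have hidx : s - (j + 1) * k = (s - k) - j * k := by
        have : (j + 1) * k = j * k + k := by ring
        omega
      have heq : Φ ^ (j + 1) * α (s - (j + 1) * k) - α s
          = Φ * (Φ ^ j * α ((s - k) - j * k) - α (s - k)) + (Φ * α (s - k) - α s) := by
        rw [hidx, pow_succ', mul_sub, mul_assoc]
        abel
      rw [heq]
      refine add_mem ?_ (h2 s (by omega) u v)
      exact matrix_mul_mem_right' _ Φ (fun u v => h1 (s - k) (by omega) u v) u v
  choose S hS using key
  -- it suffices to show each entry lies in every power of (p)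
  refine Matrix.ext fun u v => ?_
  rw [Matrix.zero_apply]
  have hmemN : ∀ N : ℕ, (Φ ^ r + ∑ i ∈ Finset.Icc 1 r, c i • Φ ^ (r - i)) u v ∈
      Ideal.span {(p : WittVector p (GaloisField p k)) ^ N} := by
    intro N
    obtain ⟨C, Sb, hbb⟩ := hb
    set T : ℕ := (Finset.range (r + 1)).sup (fun j => S j N) with hT
    set s : ℕ := Sb + (r * k + C) + (C + N) + T + r * k + k with hs
    have hTle : ∀ j, j ≤ r → S j N ≤ T := by
      intro j hj
      rw [hT]
      have hjm : j ∈ Finset.range (r + 1) := Finset.mem_range.mpr (by omega)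
      exact Finset.le_sup (f := fun j => S j N) hjm
    -- entries of M * α (s - rk) lie in p^N
    have hM : ∀ u v : Fin g,
        ((Φ ^ r + ∑ i ∈ Finset.Icc 1 r, c i • Φ ^ (r - i)) * α (s - r * k)) u v ∈
          Ideal.span {(p : WittVector p (GaloisField p k)) ^ N} := by
      intro u v
      have eq1 : (Φ ^ r + ∑ i ∈ Finset.Icc 1 r, c i • Φ ^ (r - i)) * α (s - r * k)
          = (Φ ^ r * α (s - r * k) - α s)
            + (∑ i ∈ Finset.Icc 1 r, c i • (Φ ^ (r - i) * α (s - r * k) - α (s - i * k)))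
            + (α s + ∑ i ∈ Finset.Icc 1 r, c i • α (s - i * k)) := by
        simp only [add_mul, Finset.sum_mul, smul_mul_assoc, smul_sub,
          Finset.sum_sub_distrib]
        abel
      rw [eq1, Matrix.add_apply, Matrix.add_apply]
      refine add_mem (add_mem ?_ ?_) ?_
      · exact hS r N s (by have := hTle r le_rfl; omega) u v
      · rw [Matrix.sum_apply]
        refine Ideal.sum_mem _ fun i hi => ?_
        obtain ⟨hi1, hi2⟩ := Finset.mem_Icc.mp hi
        have hik : i * k + (r - i) * k = r * k := by
          rw [← Nat.add_mul, Nat.add_sub_cancel' hi2]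
        have hidx : (s - i * k) - (r - i) * k = s - r * k := by omega
        have hik' : i * k ≤ r * k := Nat.mul_le_mul_right k hi2
        have hmm := hS (r - i) N (s - i * k)
          (by have := hTle (r - i) (by omega); omega) u v
        rw [hidx] at hmm
        rw [Matrix.smul_apply]
        exact zsmul_mem hmm (c i)
      · have hmem := hbb s (by omega) (by omega) u v
        have hle : Ideal.span {(p : WittVector p (GaloisField p k)) ^ (s - C)} ≤
            Ideal.span {(p : WittVector p (GaloisField p k)) ^ N} :=
          Ideal.span_singleton_le_span_singleton.mpr
            (pow_dvd_pow _ (by omega : N ≤ s - C))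
        exact hle hmem
    -- cancel the invertible matrix α (s - rk)
    obtain ⟨U, hU⟩ := hα (s - r * k)
    have hrw : (Φ ^ r + ∑ i ∈ Finset.Icc 1 r, c i • Φ ^ (r - i))
        = ((Φ ^ r + ∑ i ∈ Finset.Icc 1 r, c i • Φ ^ (r - i)) * α (s - r * k))
          * ((U⁻¹ : (Matrix (Fin g) (Fin g) (WittVector p (GaloisField p k)))ˣ) :
              Matrix (Fin g) (Fin g) (WittVector p (GaloisField p k))) := by
      rw [mul_assoc, ← hU, Units.mul_inv, mul_one]
    rw [hrw]
    exact matrix_mul_mem_left' _ _ hM u v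
  -- Krull intersection theorem in the DVR
  have hbot : ⨅ n : ℕ, (Ideal.span {(p : WittVector p (GaloisField p k))}) ^ n = ⊥ :=
    Ideal.iInf_pow_eq_bot_of_isDomain
      (Ideal.span {(p : WittVector p (GaloisField p k))})
      (fun h => hpnu (Ideal.span_singleton_eq_top.mp h))
  have : (Φ ^ r + ∑ i ∈ Finset.Icc 1 r, c i • Φ ^ (r - i)) u v ∈
      (⊥ : Ideal (WittVector p (GaloisField p k))) := by
    rw [← hbot]
    exact Ideal.mem_iInf.mpr fun n => by
      rw [Ideal.span_singleton_pow]; exact hmemN n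
  rwa [Ideal.mem_bot] at this
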